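/- For every ε > 0, the functions η(u,ρ) = u²/2 + ε·e^ρ and q(u,ρ) = u³/3 + ε·ρ·u·e^ρ form an entropy–entropy flux pair for the perturbed Euler system u_t + (u²/2 + ε p(ρ))_x = 0, ρ_t + (ρu)_x = 0; that is, for all (u,ρ) ∈ ℝ², ∂q/∂u = u·∂η/∂u + ρ·∂η/∂ρ and ∂q/∂ρ = ε·ρ·e^ρ·∂η/∂u + u·∂η/∂ρ. Moreover η is strictly convex: its Hessian matrix is positive definite at every point of ℝ². -/

import Mathlib

open Real Filter Topology

/-- The pressure-like function `p(ρ) = ∫₀^ρ ξ·e^ξ dξ`. -/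
noncomputable def p (ρ : ℝ) : ℝ := ∫ ξ in (0:ℝ)..ρ, ξ * Real.exp ξ

lemma etaDerivU (ε ρ u : ℝ) :
    deriv (fun v : ℝ => v ^ 2 / 2 + ε * Real.exp ρ) u = u := by
  simp [deriv_add, deriv_div_const]

lemma etaDerivR (ε u ρ : ℝ) :
    deriv (fun r : ℝ => u ^ 2 / 2 + ε * Real.exp r) ρ = ε * Real.exp ρ := by
  simp

lemma qDerivU (ε u ρ : ℝ) :
    deriv (fun v : ℝ => v ^ 3 / 3 + ε * ρ * v * Real.exp ρ) u
      = u ^ 2 + ε * ρ * Real.exp ρ := by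
  have h : HasDerivAt (fun v : ℝ => v ^ 3 / 3 + ε * ρ * v * Real.exp ρ)
      ((3 : ℕ) * u ^ 2 / 3 + ε * ρ * 1 * Real.exp ρ) u := by
    have h1 := (hasDerivAt_pow 3 u).div_const 3
    have h2 := ((hasDerivAt_id u).const_mul (ε * ρ)).mul_const (Real.exp ρ)
    simpa [mul_assoc, Pi.add_def] using h1.add h2
  rw [h.deriv]; push_cast; ring

lemma qDerivR (ε u ρ : ℝ) :
    deriv (fun r : ℝ => u ^ 3 / 3 + ε * r * u * Real.exp r) ρ
      = ε * u * Real.exp ρ + ε * ρ * u * Real.exp ρ := by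
  have heq : (fun r : ℝ => u ^ 3 / 3 + ε * r * u * Real.exp r)
      = fun r => u ^ 3 / 3 + (ε * u) * (r * Real.exp r) := by
    ext r; ring
  rw [heq]
  have h1 : HasDerivAt (fun r : ℝ => r * Real.exp r)
      (1 * Real.exp ρ + ρ * Real.exp ρ) ρ :=
    (hasDerivAt_id ρ).mul (Real.hasDerivAt_exp ρ)
  rw [deriv_fun_add (by fun_prop) ((h1.const_mul (ε * u)).differentiableAt)]
  rw [(h1.const_mul (ε * u)).deriv]
  simp; ring

lemma hessPosDef (ε ρ : ℝ) (hε : 0 < ε) :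
    (!![(1 : ℝ), 0; 0, ε * Real.exp ρ] : Matrix (Fin 2) (Fin 2) ℝ).PosDef := by
  have hexp := Real.exp_pos ρ
  refine Matrix.PosDef.of_dotProduct_mulVec_pos ?_ ?_
  · unfold Matrix.IsHermitian; ext i j; fin_cases i <;> fin_cases j <;> simp
  · intro x hx
    have he : (0 : ℝ) < ε * Real.exp ρ := mul_pos hε hexp
    simp [dotProduct, Matrix.mulVec, Fin.sum_univ_two]
    by_cases h0 : x 0 = 0
    · have h1 : x 1 ≠ 0 := by
        intro h1; apply hx; ext j; fin_cases j <;> simp [h0, h1]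
      nlinarith [mul_self_pos.mpr h1, mul_self_nonneg (x 0),
        mul_pos he (mul_self_pos.mpr h1)]
    · nlinarith [mul_self_pos.mpr h0, mul_nonneg he.le (mul_self_nonneg (x 1))]

/-- `η(u,ρ) = u²/2 + ε e^ρ` and `q(u,ρ) = u³/3 + ε ρ u e^ρ` form an entropy–entropy flux
pair for the perturbed Euler system, and the Hessian of `η` is positive definite
everywhere (strict convexity). -/
theorem stmt12 (ε : ℝ) (hε : 0 < ε) :
    let η : ℝ → ℝ → ℝ := fun u ρ => u ^ 2 / 2 + ε * Real.exp ρ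
    let q : ℝ → ℝ → ℝ := fun u ρ => u ^ 3 / 3 + ε * ρ * u * Real.exp ρ
    ∀ u ρ : ℝ,
      deriv (fun v => q v ρ) u
        = u * deriv (fun v => η v ρ) u + ρ * deriv (fun r => η u r) ρ ∧
      deriv (fun r => q u r) ρ
        = ε * ρ * Real.exp ρ * deriv (fun v => η v ρ) u + u * deriv (fun r => η u r) ρ ∧
      (!![deriv (fun v => deriv (fun w => η w ρ) v) u,
          deriv (fun r => deriv (fun w => η w r) u) ρ;
          deriv (fun v => deriv (fun r => η v r) ρ) u,
          deriv (fun r => deriv (fun s => η u s) r) ρ] : Matrix (Fin 2) (Fin 2) ℝ).PosDef := by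
  intro η q u ρ
  have hA : (fun v : ℝ => deriv (fun w => η w ρ) v) = fun v : ℝ => v := by
    funext v; exact etaDerivU ε ρ v
  have hB : (fun r : ℝ => deriv (fun w => η w r) u) = fun _ : ℝ => u := by
    funext r; exact etaDerivU ε r u
  have hC : (fun v : ℝ => deriv (fun r => η v r) ρ) = fun _ : ℝ => ε * Real.exp ρ := by
    funext v; exact etaDerivR ε v ρ
  have hD : (fun r : ℝ => deriv (fun s => η u s) r) = fun r : ℝ => ε * Real.exp r := by
    funext r; exact etaDerivR ε u r
  refine ⟨?_, ?_, ?_⟩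
  · rw [show (fun v => q v ρ) = fun v : ℝ => v ^ 3 / 3 + ε * ρ * v * Real.exp ρ from rfl,
      qDerivU, etaDerivU, etaDerivR]
    ring
  · rw [show (fun r => q u r) = fun r : ℝ => u ^ 3 / 3 + ε * r * u * Real.exp r from rfl,
      qDerivR, etaDerivU, etaDerivR]
    ring
  · rw [hA, hB, hC, hD]
    have e1 : deriv (fun v : ℝ => v) u = 1 := by simp
    have e2 : deriv (fun _ : ℝ => u) ρ = 0 := by simp
    have e3 : deriv (fun _ : ℝ => ε * Real.exp ρ) u = 0 := by simp
    have e4 : deriv (fun r : ℝ => ε * Real.exp r) ρ = ε * Real.exp ρ := by simp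
    rw [e1, e2, e3, e4]
    exact hessPosDef ε ρ hε
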